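/- Let X be distributed according to Beta(α, β) with positive integers α, β and α + β ≥ 2, and let ρ = (α−1)/(α+β−1). Then for any y > 0, P(|X − ρ| ≥ y) ≤ 2·exp(−(α+β−1)·y²). -/

import Mathlib

open MeasureTheory Finset


private lemma bernoulli_mgf (p x : ℝ) (hp0 : 0 ≤ p) (hp1 : p ≤ 1) :
    1 - p + p * Real.exp x ≤ Real.exp (p * x + x ^ 2 / 8) := by
  set g : ℝ → ℝ := fun l => 1 - p + p * Real.exp l with hg
  have hgpos : ∀ l, 0 < g l := by
    intro l
    have h1 := Real.exp_pos l
    have h2 : 0 ≤ p * Real.exp l := mul_nonneg hp0 h1.le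
    simp only [hg]
    nlinarith
  have hgd : ∀ l, HasDerivAt g (p * Real.exp l) l := by
    intro l
    exact ((Real.hasDerivAt_exp l).const_mul p).const_add (1 - p)
  set φ : ℝ → ℝ := fun l => p * Real.exp l / g l with hφ
  have hlogd : ∀ l, HasDerivAt (fun l => Real.log (g l)) (φ l) l := by
    intro l
    exact (hgd l).log (hgpos l).ne'
  set L : ℝ → ℝ := fun l => p * l + l ^ 2 / 8 - Real.log (g l) with hL
  set D : ℝ → ℝ := fun l => p + l / 4 - φ l with hD
  have hLd : ∀ l, HasDerivAt L (D l) l := by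
    intro l
    have h1 : HasDerivAt (fun l : ℝ => p * l + l ^ 2 / 8) (p + l / 4) l := by
      have h2 : HasDerivAt (fun l : ℝ => p * l) p l := by
        simpa using (hasDerivAt_id l).const_mul p
      have h3 : HasDerivAt (fun l : ℝ => l ^ 2 / 8) ((2 : ℕ) * l ^ 1 / 8) l :=
        (hasDerivAt_pow 2 l).div_const 8
      have : HasDerivAt (fun l : ℝ => p * l + l ^ 2 / 8) (p + (2 : ℕ) * l ^ 1 / 8) l := h2.add h3
      convert this using 1
      push_cast; ring
    exact h1.sub (hlogd l)
  have hφd : ∀ l, HasDerivAt φ ((p * Real.exp l * g l - p * Real.exp l * (p * Real.exp l)) / g l ^ 2) l := by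
    intro l
    exact ((Real.hasDerivAt_exp l).const_mul p).div (hgd l) (hgpos l).ne'
  have hφle : ∀ l, (p * Real.exp l * g l - p * Real.exp l * (p * Real.exp l)) / g l ^ 2 ≤ 1 / 4 := by
    intro l
    rw [div_le_iff₀ (pow_pos (hgpos l) 2)]
    have he := Real.exp_pos l
    simp only [hg]
    nlinarith [sq_nonneg (1 - p - p * Real.exp l), mul_nonneg hp0 he.le]
  have hDd : ∀ l, HasDerivAt D (1 / 4 - (p * Real.exp l * g l - p * Real.exp l * (p * Real.exp l)) / g l ^ 2) l := by
    intro l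
    have h1 : HasDerivAt (fun l : ℝ => p + l / 4) (1 / 4) l := by
      simpa using ((hasDerivAt_id l).div_const 4).const_add p
    exact h1.sub (hφd l)
  have hDmono : Monotone D :=
    monotone_of_deriv_nonneg (fun l => (hDd l).differentiableAt)
      (fun l => by rw [(hDd l).deriv]; linarith [hφle l])
  have hD0 : D 0 = 0 := by
    simp only [hD, hφ, hg, Real.exp_zero, mul_one]
    field_simp
    ring
  have hLdiff : Differentiable ℝ L := fun l => (hLd l).differentiableAt
  have hL0 : L 0 = 0 := by
    simp [hL, hg, Real.exp_zero]
  have hLnonneg : ∀ l, 0 ≤ L l := by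
    intro l
    rcases le_total 0 l with h | h
    · have hmono : MonotoneOn L (Set.Ici (0 : ℝ)) := by
        apply monotoneOn_of_deriv_nonneg (convex_Ici 0) hLdiff.continuous.continuousOn
          hLdiff.differentiableOn
        intro x hx
        rw [(hLd x).deriv]
        rw [interior_Ici] at hx
        have hx0 : (0 : ℝ) ≤ x := le_of_lt hx
        calc (0 : ℝ) = D 0 := hD0.symm
          _ ≤ D x := hDmono hx0
      have := hmono (Set.mem_Ici.mpr le_rfl) (Set.mem_Ici.mpr h) h
      rwa [hL0] at this
    · have hmono : AntitoneOn L (Set.Iic (0 : ℝ)) := by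
        apply antitoneOn_of_deriv_nonpos (convex_Iic 0) hLdiff.continuous.continuousOn
          hLdiff.differentiableOn
        intro x hx
        rw [(hLd x).deriv]
        rw [interior_Iic] at hx
        have hx0 : x ≤ 0 := le_of_lt hx
        calc D x ≤ D 0 := hDmono hx0
          _ = 0 := hD0
      have := hmono (Set.mem_Iic.mpr h) (Set.mem_Iic.mpr le_rfl) h
      rwa [hL0] at this
  have hfin := hLnonneg x
  simp only [hL] at hfin
  have hlog : Real.log (g x) ≤ p * x + x ^ 2 / 8 := by linarith
  calc 1 - p + p * Real.exp x = g x := rfl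
    _ = Real.exp (Real.log (g x)) := (Real.exp_log (hgpos x)).symm
    _ ≤ Real.exp (p * x + x ^ 2 / 8) := Real.exp_le_exp.mpr hlog


private def Gfun (n : ℕ) (t : ℝ) : ℕ → ℝ
  | 0 => 0
  | j + 1 => (n : ℝ) * ((n - 1).choose j : ℝ) * t ^ j * (1 - t) ^ (n - 1 - j)

private lemma nat_id1 (n j : ℕ) (hn : 1 ≤ n) :
    n * (n - 1).choose j = n.choose (j + 1) * (j + 1) := by
  have h2 := Nat.add_one_mul_choose_eq (n - 1) j
  have h3 : n - 1 + 1 = n := by omega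
  rw [h3] at h2
  simpa [Nat.succ_eq_add_one] using h2

private lemma nat_id2 (n k : ℕ) (hn : 1 ≤ n) :
    n * (n - 1).choose k = n.choose k * (n - k) := by
  rw [nat_id1 n k hn, Nat.choose_succ_right_eq]

private lemma hasDerivAt_tailF (n m : ℕ) (hm1 : 1 ≤ m) (hmn : m ≤ n) (t : ℝ) :
    HasDerivAt (fun s : ℝ => ∑ k ∈ Finset.range m, (n.choose k : ℝ) * s ^ k * (1 - s) ^ (n - k))
      (-((n : ℝ) * ((n - 1).choose (m - 1) : ℝ) * t ^ (m - 1) * (1 - t) ^ (n - m))) t := by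
  have hn1 : 1 ≤ n := le_trans hm1 hmn
  have key : ∀ k ∈ Finset.range m,
      HasDerivAt (fun s : ℝ => (n.choose k : ℝ) * s ^ k * (1 - s) ^ (n - k))
        (Gfun n t k - Gfun n t (k + 1)) t := by
    intro k hk
    have hkm := Finset.mem_range.mp hk
    have hkn : k < n := lt_of_lt_of_le hkm hmn
    have h1 : HasDerivAt (fun s : ℝ => (n.choose k : ℝ) * s ^ k)
        ((n.choose k : ℝ) * ((k : ℝ) * t ^ (k - 1))) t := (hasDerivAt_pow k t).const_mul _
    have h2 : HasDerivAt (fun s : ℝ => (1 - s) ^ (n - k))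
        (((n - k : ℕ) : ℝ) * (1 - t) ^ (n - k - 1) * (-1)) t := by
      have h0 : HasDerivAt (fun s : ℝ => 1 - s) (-1) t := by
        simpa using (hasDerivAt_id t).const_sub 1
      exact h0.pow (n - k)
    have h3 := h1.mul h2
    have hval : (n.choose k : ℝ) * ((k : ℝ) * t ^ (k - 1)) * (1 - t) ^ (n - k)
        + (n.choose k : ℝ) * t ^ k * (((n - k : ℕ) : ℝ) * (1 - t) ^ (n - k - 1) * (-1))
        = Gfun n t k - Gfun n t (k + 1) := by
      have e2 : ((n.choose k : ℕ) * (n - k) : ℕ) = (n * (n - 1).choose k : ℕ) :=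
        (nat_id2 n k hn1).symm
      cases k with
      | zero =>
          simp only [Gfun, Nat.choose_zero_right, Nat.cast_one, pow_zero, Nat.sub_zero,
            Nat.cast_zero, zero_mul, mul_zero, zero_add, one_mul, mul_one, zero_sub]
          ring
      | succ j =>
          have e1' : (n.choose (j+1) : ℝ) * ((j : ℝ) + 1) = (n : ℝ) * ((n - 1).choose j : ℝ) := by
            exact_mod_cast congrArg (Nat.cast (R := ℝ)) (nat_id1 n j hn1).symm
          have e2' : (n.choose (j+1) : ℝ) * ((n - 1 - j : ℕ) : ℝ)
              = (n : ℝ) * ((n - 1).choose (j+1) : ℝ) := by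
            have h := (nat_id2 n (j+1) hn1).symm
            rw [show n - (j + 1) = n - 1 - j from by omega] at h
            exact_mod_cast congrArg (Nat.cast (R := ℝ)) h
          simp only [Gfun, Nat.add_sub_cancel]
          rw [show n - (j + 1) = n - 1 - j from by omega,
            show n - 1 - j - 1 = n - 1 - (j + 1) from by omega]
          push_cast
          linear_combination (t ^ j * (1 - t) ^ (n - 1 - j)) * e1'
            - (t ^ (j + 1) * (1 - t) ^ (n - 1 - (j + 1))) * e2'
    exact hval ▸ h3
  have hsum := HasDerivAt.sum key
  have htel : ∑ k ∈ Finset.range m, (Gfun n t k - Gfun n t (k + 1)) = Gfun n t 0 - Gfun n t m :=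
    Finset.sum_range_sub' (Gfun n t) m
  rw [htel] at hsum
  have hm' : m = (m - 1) + 1 := by omega
  have hGm : Gfun n t m = (n : ℝ) * ((n - 1).choose (m - 1) : ℝ) * t ^ (m - 1) * (1 - t) ^ (n - m) := by
    rw [hm']
    show Gfun n t ((m-1)+1) = _
    rw [show Gfun n t ((m-1)+1) = (n : ℝ) * ((n - 1).choose (m-1) : ℝ) * t ^ (m-1) * (1 - t) ^ (n - 1 - (m-1)) from rfl]
    congr 2
    omega
  rw [show Gfun n t 0 = 0 from rfl, hGm, zero_sub] at hsum
  rw [Finset.sum_fn] at hsum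
  exact hsum

private lemma term_nonneg (n k : ℕ) (s : ℝ) (hs0 : 0 ≤ s) (hs1 : s ≤ 1) :
    0 ≤ (n.choose k : ℝ) * s ^ k * (1 - s) ^ (n - k) := by
  have h1 : (0:ℝ) ≤ 1 - s := by linarith
  positivity

private lemma pow_base_le (n : ℕ) (s x : ℝ) (hs0 : 0 ≤ s) (hs1 : s ≤ 1) :
    (s * Real.exp x + (1 - s)) ^ n ≤ Real.exp ((n : ℝ) * (s * x + x ^ 2 / 8)) := by
  have h := bernoulli_mgf s x hs0 hs1
  have hb : 0 ≤ s * Real.exp x + (1 - s) :=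
    add_nonneg (mul_nonneg hs0 (Real.exp_pos x).le) (by linarith)
  calc (s * Real.exp x + (1 - s)) ^ n ≤ (Real.exp (s * x + x ^ 2 / 8)) ^ n :=
        pow_le_pow_left₀ hb (by linarith) n
    _ = Real.exp ((n : ℝ) * (s * x + x ^ 2 / 8)) := (Real.exp_nat_mul _ n).symm

private lemma chernoff_lower (n m : ℕ) (hm : m ≤ n + 1) (s l : ℝ)
    (hs0 : 0 ≤ s) (hs1 : s ≤ 1) (hl : 0 ≤ l) :
    ∑ k ∈ Finset.range m, (n.choose k : ℝ) * s ^ k * (1 - s) ^ (n - k) ≤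
      Real.exp (l * ((m : ℝ) - 1)) * (s * Real.exp (-l) + (1 - s)) ^ n := by
  have step1 : ∑ k ∈ Finset.range m, (n.choose k : ℝ) * s ^ k * (1 - s) ^ (n - k) ≤
      ∑ k ∈ Finset.range m, ((n.choose k : ℝ) * s ^ k * (1 - s) ^ (n - k))
        * Real.exp (l * ((m : ℝ) - 1 - (k : ℝ))) := by
    refine Finset.sum_le_sum fun k hk => ?_
    have hk' : (k : ℝ) + 1 ≤ (m : ℝ) := by exact_mod_cast Finset.mem_range.mp hk
    refine le_mul_of_one_le_right (term_nonneg n k s hs0 hs1)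
      (Real.one_le_exp (mul_nonneg hl (by linarith)))
  have step2 : ∑ k ∈ Finset.range m, ((n.choose k : ℝ) * s ^ k * (1 - s) ^ (n - k))
        * Real.exp (l * ((m : ℝ) - 1 - (k : ℝ))) ≤
      ∑ k ∈ Finset.range (n + 1), ((n.choose k : ℝ) * s ^ k * (1 - s) ^ (n - k))
        * Real.exp (l * ((m : ℝ) - 1 - (k : ℝ))) :=
    Finset.sum_le_sum_of_subset_of_nonneg (Finset.range_subset_range.mpr hm)
      (fun k _ _ => mul_nonneg (term_nonneg n k s hs0 hs1) (Real.exp_pos _).le)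
  have step3 : ∑ k ∈ Finset.range (n + 1), ((n.choose k : ℝ) * s ^ k * (1 - s) ^ (n - k))
        * Real.exp (l * ((m : ℝ) - 1 - (k : ℝ))) =
      Real.exp (l * ((m : ℝ) - 1)) * (s * Real.exp (-l) + (1 - s)) ^ n := by
    rw [add_pow, Finset.mul_sum]
    refine Finset.sum_congr rfl fun k hk => ?_
    rw [mul_pow, ← Real.exp_nat_mul,
      show l * ((m : ℝ) - 1 - (k : ℝ)) = l * ((m : ℝ) - 1) + (k : ℝ) * (-l) by ring,
      Real.exp_add]
    ring
  calc _ ≤ _ := step1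
    _ ≤ _ := step2
    _ = _ := step3

private lemma chernoff_upper (n m : ℕ) (s l : ℝ)
    (hs0 : 0 ≤ s) (hs1 : s ≤ 1) (hl : 0 ≤ l) :
    ∑ k ∈ Finset.Ico m (n + 1), (n.choose k : ℝ) * s ^ k * (1 - s) ^ (n - k) ≤
      Real.exp (-(l * (m : ℝ))) * (s * Real.exp l + (1 - s)) ^ n := by
  have step1 : ∑ k ∈ Finset.Ico m (n + 1), (n.choose k : ℝ) * s ^ k * (1 - s) ^ (n - k) ≤
      ∑ k ∈ Finset.Ico m (n + 1), ((n.choose k : ℝ) * s ^ k * (1 - s) ^ (n - k))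
        * Real.exp (l * ((k : ℝ) - (m : ℝ))) := by
    refine Finset.sum_le_sum fun k hk => ?_
    have hk' : (m : ℝ) ≤ (k : ℝ) := by exact_mod_cast (Finset.mem_Ico.mp hk).1
    refine le_mul_of_one_le_right (term_nonneg n k s hs0 hs1)
      (Real.one_le_exp (mul_nonneg hl (by linarith)))
  have step2 : ∑ k ∈ Finset.Ico m (n + 1), ((n.choose k : ℝ) * s ^ k * (1 - s) ^ (n - k))
        * Real.exp (l * ((k : ℝ) - (m : ℝ))) ≤
      ∑ k ∈ Finset.range (n + 1), ((n.choose k : ℝ) * s ^ k * (1 - s) ^ (n - k))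
        * Real.exp (l * ((k : ℝ) - (m : ℝ))) := by
    refine Finset.sum_le_sum_of_subset_of_nonneg ?_
      (fun k _ _ => mul_nonneg (term_nonneg n k s hs0 hs1) (Real.exp_pos _).le)
    intro k hk
    exact Finset.mem_range.mpr (Finset.mem_Ico.mp hk).2
  have step3 : ∑ k ∈ Finset.range (n + 1), ((n.choose k : ℝ) * s ^ k * (1 - s) ^ (n - k))
        * Real.exp (l * ((k : ℝ) - (m : ℝ))) =
      Real.exp (-(l * (m : ℝ))) * (s * Real.exp l + (1 - s)) ^ n := by
    rw [add_pow, Finset.mul_sum]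
    refine Finset.sum_congr rfl fun k hk => ?_
    rw [mul_pow, ← Real.exp_nat_mul,
      show l * ((k : ℝ) - (m : ℝ)) = -(l * (m : ℝ)) + (k : ℝ) * l by ring,
      Real.exp_add]
    ring
  calc _ ≤ _ := step1
    _ ≤ _ := step2
    _ = _ := step3

private lemma beta_apply (f : ℝ → ℝ) (hf : Continuous f) {u v : ℝ}
    (h0 : 0 ≤ u) (huv : u ≤ v) (h1 : v ≤ 1)
    (hfn : ∀ x ∈ Set.Icc u v, 0 ≤ f x) :
    (volume.withDensity fun x =>
        (Set.Icc (0:ℝ) 1).indicator (fun x => ENNReal.ofReal (f x)) x) (Set.Icc u v)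
      = ENNReal.ofReal (∫ x in u..v, f x) := by
  rw [withDensity_apply _ measurableSet_Icc]
  have hsub2 : Set.Icc u v ⊆ Set.Icc (0:ℝ) 1 := Set.Icc_subset_Icc h0 h1
  have e1 : ∫⁻ x in Set.Icc u v,
      (Set.Icc (0:ℝ) 1).indicator (fun x => ENNReal.ofReal (f x)) x
      = ∫⁻ x in Set.Icc u v, ENNReal.ofReal (f x) := by
    refine lintegral_congr_ae ?_
    filter_upwards [ae_restrict_mem measurableSet_Icc] with x hx
    exact Set.indicator_of_mem (hsub2 hx) _
  rw [e1]
  have hInt : IntegrableOn f (Set.Icc u v) := hf.integrableOn_Icc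
  have hnn : 0 ≤ᵐ[volume.restrict (Set.Icc u v)] f := by
    filter_upwards [ae_restrict_mem measurableSet_Icc] with x hx
    exact hfn x hx
  rw [← ofReal_integral_eq_lintegral_ofReal hInt hnn]
  congr 1
  rw [intervalIntegral.integral_of_le huv, MeasureTheory.integral_Icc_eq_integral_Ioc]

private lemma beta_compl (f : ℝ → ℝ) :
    (volume.withDensity fun x =>
        (Set.Icc (0:ℝ) 1).indicator (fun x => ENNReal.ofReal (f x)) x) ((Set.Icc (0:ℝ) 1)ᶜ)
      = 0 := by
  rw [withDensity_apply _ measurableSet_Icc.compl]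
  have e1 : ∫⁻ x in (Set.Icc (0:ℝ) 1)ᶜ,
      (Set.Icc (0:ℝ) 1).indicator (fun x => ENNReal.ofReal (f x)) x = ∫⁻ _ in (Set.Icc (0:ℝ) 1)ᶜ, 0 := by
    refine lintegral_congr_ae ?_
    filter_upwards [ae_restrict_mem measurableSet_Icc.compl] with x hx
    exact Set.indicator_of_notMem hx _
  rw [e1, lintegral_zero]

/-- The Beta(α,β) measure on ℝ (integer parameters), defined by its density
`x^(α−1)(1−x)^(β−1) / B(α,β)` on `[0,1]`. -/
noncomputable def betaMeasureNat (α β : ℕ) : Measure ℝ :=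
  (volume : Measure ℝ).withDensity fun x =>
    Set.indicator (Set.Icc (0:ℝ) 1)
      (fun x => ENNReal.ofReal
        (((α + β - 1).factorial : ℝ) / ((α - 1).factorial * (β - 1).factorial) *
          (x ^ (α - 1) * (1 - x) ^ (β - 1)))) x

theorem stmt_8 (α β : ℕ) (hα : 1 ≤ α) (hβ : 1 ≤ β) (hαβ : 2 ≤ α + β)
    (y : ℝ) (hy : 0 < y) :
    let ρ : ℝ := ((α : ℝ) - 1) / ((α : ℝ) + β - 1)
    betaMeasureNat α β {x : ℝ | y ≤ |x - ρ|} ≤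
      ENNReal.ofReal (2 * Real.exp (-(((α : ℝ) + β - 1) * y ^ 2))) := by
  intro ρ
  set n : ℕ := α + β - 1 with hn
  have hn1 : 1 ≤ n := by omega
  have hmn : α ≤ n := by omega
  have hncast : (n : ℝ) = (α : ℝ) + β - 1 := by
    rw [hn, Nat.cast_sub (by omega : 1 ≤ α + β)]
    push_cast; ring
  have hnpos : (0 : ℝ) < n := by
    rw [hncast]
    have h1 : (1:ℝ) ≤ (α:ℝ) := by exact_mod_cast hα
    have h2 : (1:ℝ) ≤ (β:ℝ) := by exact_mod_cast hβ
    linarith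
  have hα1 : (1:ℝ) ≤ (α:ℝ) := by exact_mod_cast hα
  have hαn : (α:ℝ) ≤ (n:ℝ) := by exact_mod_cast hmn
  have hρdef : ρ = ((α : ℝ) - 1) / ((α : ℝ) + ↑β - 1) := rfl
  have hρdef' : ρ = ((α : ℝ) - 1) / (n : ℝ) := by rw [hρdef, hncast]
  have hρmul : (α : ℝ) - 1 = (n : ℝ) * ρ := by
    rw [hρdef']; field_simp
  have hρ0 : 0 ≤ ρ := by
    rw [hρdef']
    exact div_nonneg (by linarith) hnpos.le
  have hρ1 : ρ ≤ 1 := by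
    rw [hρdef']
    exact div_le_one_of_le₀ (by linarith) hnpos.le
  -- the density
  set dens : ℝ → ℝ := fun x =>
    ((α + β - 1).factorial : ℝ) / ((α - 1).factorial * (β - 1).factorial) *
      (x ^ (α - 1) * (1 - x) ^ (β - 1)) with hdensdef
  have hrfl : betaMeasureNat α β = volume.withDensity fun x =>
      (Set.Icc (0:ℝ) 1).indicator (fun x => ENNReal.ofReal (dens x)) x := rfl
  have hcont : Continuous dens := by
    rw [hdensdef]
    exact continuous_const.mul ((continuous_pow _).mul
      ((continuous_const.sub continuous_id).pow _))
  have hdnn : ∀ x ∈ Set.Icc (0:ℝ) 1, 0 ≤ dens x := by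
    intro x hx
    have h1 : (0:ℝ) ≤ x := hx.1
    have h2 : (0:ℝ) ≤ 1 - x := by linarith [hx.2]
    rw [hdensdef]
    positivity
  -- constant identity
  have hc : ((α + β - 1).factorial : ℝ) / ((α - 1).factorial * (β - 1).factorial)
      = (n : ℝ) * ((n - 1).choose (α - 1) : ℝ) := by
    have hnat : n * ((n - 1).choose (α - 1)) * ((α - 1).factorial * (β - 1).factorial)
        = n.factorial := by
      have h1 := Nat.choose_mul_factorial_mul_factorial (show α - 1 ≤ n - 1 by omega)
      rw [show n - 1 - (α - 1) = β - 1 from by omega] at h1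
      calc n * ((n - 1).choose (α - 1)) * ((α - 1).factorial * (β - 1).factorial)
          = n * ((n - 1).choose (α - 1) * (α - 1).factorial * (β - 1).factorial) := by ring
        _ = n * (n - 1).factorial := by rw [h1]
        _ = n.factorial := Nat.mul_factorial_pred (by omega)
    have hpos : (0:ℝ) < ((α - 1).factorial : ℝ) * ((β - 1).factorial : ℝ) := by positivity
    rw [div_eq_iff hpos.ne', show α + β - 1 = n from rfl]
    exact_mod_cast hnat.symm
  have hdens_eq : ∀ t : ℝ, dens t
      = (n : ℝ) * ((n - 1).choose (α - 1) : ℝ) * t ^ (α - 1) * (1 - t) ^ (n - α) := by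
    intro t
    rw [hdensdef]
    simp only []
    rw [hc, show β - 1 = n - α from by omega]
    ring
  -- the tail CDF
  set F : ℝ → ℝ := fun s => ∑ k ∈ Finset.range α, (n.choose k : ℝ) * s ^ k * (1 - s) ^ (n - k)
    with hFdef
  have hder : ∀ t : ℝ, HasDerivAt (fun s => -F s) (dens t) t := by
    intro t
    have h := (hasDerivAt_tailF n α hα hmn t).neg
    rw [neg_neg] at h
    rw [hdens_eq t]
    exact h
  have hFTC : ∀ u v : ℝ, u ≤ v → ∫ x in u..v, dens x = F u - F v := by
    intro u v huv
    have h := intervalIntegral.integral_eq_sub_of_hasDerivAt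
      (f := fun s => -F s) (f' := dens) (fun x _ => hder x) (hcont.intervalIntegrable u v)
    rw [h]; ring
  have hmeas_eq : ∀ u v : ℝ, 0 ≤ u → u ≤ v → v ≤ 1 →
      betaMeasureNat α β (Set.Icc u v) = ENNReal.ofReal (F u - F v) := by
    intro u v h0 huv h1
    rw [hrfl, beta_apply dens hcont h0 huv h1
      (fun x hx => hdnn x (Set.Icc_subset_Icc h0 h1 hx)), hFTC u v huv]
  have hcompl : betaMeasureNat α β ((Set.Icc (0:ℝ) 1)ᶜ) = 0 := by
    rw [hrfl]; exact beta_compl dens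
  -- values of F
  have hF0 : F 0 = 1 := by
    simp only [hFdef]
    rw [Finset.sum_eq_single 0]
    · simp
    · intro k hk hne
      simp [zero_pow hne]
    · intro h
      exact absurd (Finset.mem_range.mpr (by omega)) h
  have hF1 : F 1 = 0 := by
    simp only [hFdef]
    refine Finset.sum_eq_zero fun k hk => ?_
    have hk' : k < α := Finset.mem_range.mp hk
    rw [show (1:ℝ) - 1 = 0 from by ring, zero_pow (show n - k ≠ 0 by omega)]
    ring
  have htot : ∀ s : ℝ, F s
      + ∑ k ∈ Finset.Ico α (n + 1), (n.choose k : ℝ) * s ^ k * (1 - s) ^ (n - k) = 1 := by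
    intro s
    have h := Finset.sum_range_add_sum_Ico
      (fun k => (n.choose k : ℝ) * s ^ k * (1 - s) ^ (n - k)) (show α ≤ n + 1 by omega)
    simp only [hFdef]
    calc (∑ k ∈ Finset.range α, (n.choose k : ℝ) * s ^ k * (1 - s) ^ (n - k))
          + ∑ k ∈ Finset.Ico α (n + 1), (n.choose k : ℝ) * s ^ k * (1 - s) ^ (n - k)
        = ∑ k ∈ Finset.range (n + 1), (n.choose k : ℝ) * s ^ k * (1 - s) ^ (n - k) := h
      _ = ∑ k ∈ Finset.range (n + 1), s ^ k * (1 - s) ^ (n - k) * (n.choose k : ℝ) :=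
          Finset.sum_congr rfl fun k _ => by ring
      _ = (s + (1 - s)) ^ n := (add_pow s (1 - s) n).symm
      _ = 1 := by norm_num
  -- tail bounds
  have hcast_nn : (0:ℝ) ≤ (n:ℝ) * y ^ 2 := mul_nonneg hnpos.le (sq_nonneg y)
  have hup : F (min 1 (ρ + y)) ≤ Real.exp (-((n:ℝ) * y ^ 2)) := by
    rcases le_or_gt 1 (ρ + y) with h | h
    · rw [min_eq_left h, hF1]
      exact (Real.exp_pos _).le
    · rw [min_eq_right h.le]
      have hs0 : 0 ≤ ρ + y := by linarith
      have hs1 : ρ + y ≤ 1 := h.le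
      have h1 := chernoff_lower n α (by omega) (ρ + y) (4 * y) hs0 hs1 (by linarith)
      have h2 := pow_base_le n (ρ + y) (-(4 * y)) hs0 hs1
      calc F (ρ + y) ≤ Real.exp (4 * y * ((α:ℝ) - 1))
            * ((ρ + y) * Real.exp (-(4 * y)) + (1 - (ρ + y))) ^ n := h1
        _ ≤ Real.exp (4 * y * ((α:ℝ) - 1))
            * Real.exp ((n:ℝ) * ((ρ + y) * (-(4 * y)) + (-(4 * y)) ^ 2 / 8)) :=
            mul_le_mul_of_nonneg_left h2 (Real.exp_pos _).le
        _ = Real.exp (4 * y * ((α:ℝ) - 1)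
            + (n:ℝ) * ((ρ + y) * (-(4 * y)) + (-(4 * y)) ^ 2 / 8)) := (Real.exp_add _ _).symm
        _ ≤ Real.exp (-((n:ℝ) * y ^ 2)) := by
            apply Real.exp_le_exp.mpr
            rw [hρmul]
            nlinarith [hcast_nn]
  have hlow : 1 - F (max 0 (ρ - y)) ≤ Real.exp (-((n:ℝ) * y ^ 2)) := by
    rcases le_or_gt (ρ - y) 0 with h | h
    · rw [max_eq_left h, hF0]
      simp only [sub_self]
      exact (Real.exp_pos _).le
    · rw [max_eq_right h.le]
      have hs0 : 0 ≤ ρ - y := h.le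
      have hs1 : ρ - y ≤ 1 := by linarith
      have heq : 1 - F (ρ - y)
          = ∑ k ∈ Finset.Ico α (n + 1), (n.choose k : ℝ) * (ρ - y) ^ k * (1 - (ρ - y)) ^ (n - k) := by
        linarith [htot (ρ - y)]
      rw [heq]
      have h1 := chernoff_upper n α (ρ - y) (4 * y) hs0 hs1 (by linarith)
      have h2 := pow_base_le n (ρ - y) (4 * y) hs0 hs1
      calc (∑ k ∈ Finset.Ico α (n + 1), (n.choose k : ℝ) * (ρ - y) ^ k * (1 - (ρ - y)) ^ (n - k))
          ≤ Real.exp (-(4 * y * (α:ℝ)))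
            * ((ρ - y) * Real.exp (4 * y) + (1 - (ρ - y))) ^ n := h1
        _ ≤ Real.exp (-(4 * y * (α:ℝ)))
            * Real.exp ((n:ℝ) * ((ρ - y) * (4 * y) + (4 * y) ^ 2 / 8)) :=
            mul_le_mul_of_nonneg_left h2 (Real.exp_pos _).le
        _ = Real.exp (-(4 * y * (α:ℝ))
            + (n:ℝ) * ((ρ - y) * (4 * y) + (4 * y) ^ 2 / 8)) := (Real.exp_add _ _).symm
        _ ≤ Real.exp (-((n:ℝ) * y ^ 2)) := by
            apply Real.exp_le_exp.mpr
            have hα' : (α:ℝ) = (n:ℝ) * ρ + 1 := by linarith [hρmul]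
            rw [hα']
            nlinarith [hcast_nn]
  -- covering
  set s1 : ℝ := max 0 (ρ - y) with hs1def
  set s2 : ℝ := min 1 (ρ + y) with hs2def
  have h0s1 : (0:ℝ) ≤ s1 := le_max_left _ _
  have hs11 : s1 ≤ 1 := max_le zero_le_one (by linarith)
  have h0s2 : (0:ℝ) ≤ s2 := le_min zero_le_one (by linarith)
  have hs21 : s2 ≤ 1 := min_le_left _ _
  have hsub : {x : ℝ | y ≤ |x - ρ|} ⊆
      Set.Icc 0 s1 ∪ Set.Icc s2 1 ∪ (Set.Icc (0:ℝ) 1)ᶜ := by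
    intro x hx
    simp only [Set.mem_setOf_eq] at hx
    by_cases hx01 : x ∈ Set.Icc (0:ℝ) 1
    · left
      rcases le_abs.mp hx with h | h
      · right
        refine ⟨?_, hx01.2⟩
        calc s2 ≤ ρ + y := min_le_right _ _
          _ ≤ x := by linarith
      · left
        refine ⟨hx01.1, ?_⟩
        have : x ≤ ρ - y := by linarith
        calc x ≤ ρ - y := this
          _ ≤ s1 := le_max_right _ _
    · right; exact hx01
  have hexp_nn : (0:ℝ) ≤ Real.exp (-((n:ℝ) * y ^ 2)) := (Real.exp_pos _).le
  calc betaMeasureNat α β {x : ℝ | y ≤ |x - ρ|}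
      ≤ betaMeasureNat α β (Set.Icc 0 s1 ∪ Set.Icc s2 1 ∪ (Set.Icc (0:ℝ) 1)ᶜ) :=
        measure_mono hsub
    _ ≤ betaMeasureNat α β (Set.Icc 0 s1 ∪ Set.Icc s2 1)
        + betaMeasureNat α β ((Set.Icc (0:ℝ) 1)ᶜ) := measure_union_le _ _
    _ ≤ (betaMeasureNat α β (Set.Icc 0 s1) + betaMeasureNat α β (Set.Icc s2 1)) + 0 :=
        add_le_add (measure_union_le _ _) (le_of_eq hcompl)
    _ = ENNReal.ofReal (F 0 - F s1) + ENNReal.ofReal (F s2 - F 1) := by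
        rw [add_zero, hmeas_eq 0 s1 le_rfl h0s1 hs11, hmeas_eq s2 1 h0s2 hs21 le_rfl]
    _ ≤ ENNReal.ofReal (Real.exp (-((n:ℝ) * y ^ 2)))
        + ENNReal.ofReal (Real.exp (-((n:ℝ) * y ^ 2))) := by
        refine add_le_add (ENNReal.ofReal_le_ofReal ?_) (ENNReal.ofReal_le_ofReal ?_)
        · rw [hF0]; exact hlow
        · rw [hF1, sub_zero]; exact hup
    _ = ENNReal.ofReal (2 * Real.exp (-((n:ℝ) * y ^ 2))) := by
        rw [← ENNReal.ofReal_add hexp_nn hexp_nn]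
        congr 1; ring
    _ = ENNReal.ofReal (2 * Real.exp (-(((α : ℝ) + β - 1) * y ^ 2))) := by rw [hncast]
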